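/- Let (S,*,n) and (S',⋆,n') be Okubo algebras over a field k. Suppose x, y ∈ S satisfy n(x) = n(y) = 0, n(x, x*x) ≠ 0, n(y, y*y) ≠ 0, n(a, b) = 0 for all a ∈ {x, x*x}, b ∈ {y, y*y}, and x*y = 0; suppose x', y' ∈ S' satisfy the analogous conditions with respect to ⋆ and n', including x'⋆y' = 0. If n(x, x*x) = n'(x', x'⋆x') and n(y, y*y) = n'(y', y'⋆y'), then there exists a k-linear bijection φ : S → S' with φ(a*b) = φ(a) ⋆ φ(b) and n'(φ(a)) = n(a) for all a, b ∈ S, and with φ(x) = x' and φ(y) = y'. -/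

import Mathlib

open QuadraticMap

namespace Okubo7

@[simp] lemma vec8_0 {g : Type*} (a0 a1 a2 a3 a4 a5 a6 a7 : g) :
    ![a0,a1,a2,a3,a4,a5,a6,a7] (0 : Fin 8) = a0 := rfl
@[simp] lemma vec8_1 {g : Type*} (a0 a1 a2 a3 a4 a5 a6 a7 : g) :
    ![a0,a1,a2,a3,a4,a5,a6,a7] (1 : Fin 8) = a1 := rfl
@[simp] lemma vec8_2 {g : Type*} (a0 a1 a2 a3 a4 a5 a6 a7 : g) :
    ![a0,a1,a2,a3,a4,a5,a6,a7] (2 : Fin 8) = a2 := rfl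
@[simp] lemma vec8_3 {g : Type*} (a0 a1 a2 a3 a4 a5 a6 a7 : g) :
    ![a0,a1,a2,a3,a4,a5,a6,a7] (3 : Fin 8) = a3 := rfl
@[simp] lemma vec8_4 {g : Type*} (a0 a1 a2 a3 a4 a5 a6 a7 : g) :
    ![a0,a1,a2,a3,a4,a5,a6,a7] (4 : Fin 8) = a4 := rfl
@[simp] lemma vec8_5 {g : Type*} (a0 a1 a2 a3 a4 a5 a6 a7 : g) :
    ![a0,a1,a2,a3,a4,a5,a6,a7] (5 : Fin 8) = a5 := rfl
@[simp] lemma vec8_6 {g : Type*} (a0 a1 a2 a3 a4 a5 a6 a7 : g) :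
    ![a0,a1,a2,a3,a4,a5,a6,a7] (6 : Fin 8) = a6 := rfl
@[simp] lemma vec8_7 {g : Type*} (a0 a1 a2 a3 a4 a5 a6 a7 : g) :
    ![a0,a1,a2,a3,a4,a5,a6,a7] (7 : Fin 8) = a7 := rfl

@[simp] lemma vec8m_0 {g : Type*} (a0 a1 a2 a3 a4 a5 a6 a7 : g) (h : (0:ℕ) < 8) :
    ![a0,a1,a2,a3,a4,a5,a6,a7] (⟨0, h⟩ : Fin 8) = a0 := rfl
@[simp] lemma vec8m_1 {g : Type*} (a0 a1 a2 a3 a4 a5 a6 a7 : g) (h : (1:ℕ) < 8) :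
    ![a0,a1,a2,a3,a4,a5,a6,a7] (⟨1, h⟩ : Fin 8) = a1 := rfl
@[simp] lemma vec8m_2 {g : Type*} (a0 a1 a2 a3 a4 a5 a6 a7 : g) (h : (2:ℕ) < 8) :
    ![a0,a1,a2,a3,a4,a5,a6,a7] (⟨2, h⟩ : Fin 8) = a2 := rfl
@[simp] lemma vec8m_3 {g : Type*} (a0 a1 a2 a3 a4 a5 a6 a7 : g) (h : (3:ℕ) < 8) :
    ![a0,a1,a2,a3,a4,a5,a6,a7] (⟨3, h⟩ : Fin 8) = a3 := rfl
@[simp] lemma vec8m_4 {g : Type*} (a0 a1 a2 a3 a4 a5 a6 a7 : g) (h : (4:ℕ) < 8) :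
    ![a0,a1,a2,a3,a4,a5,a6,a7] (⟨4, h⟩ : Fin 8) = a4 := rfl
@[simp] lemma vec8m_5 {g : Type*} (a0 a1 a2 a3 a4 a5 a6 a7 : g) (h : (5:ℕ) < 8) :
    ![a0,a1,a2,a3,a4,a5,a6,a7] (⟨5, h⟩ : Fin 8) = a5 := rfl
@[simp] lemma vec8m_6 {g : Type*} (a0 a1 a2 a3 a4 a5 a6 a7 : g) (h : (6:ℕ) < 8) :
    ![a0,a1,a2,a3,a4,a5,a6,a7] (⟨6, h⟩ : Fin 8) = a6 := rfl
@[simp] lemma vec8m_7 {g : Type*} (a0 a1 a2 a3 a4 a5 a6 a7 : g) (h : (7:ℕ) < 8) :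
    ![a0,a1,a2,a3,a4,a5,a6,a7] (⟨7, h⟩ : Fin 8) = a7 := rfl

/-- target index table for products of the standard basis -/
def tIdx : Fin 8 → Fin 8 → Fin 8 :=
  ![![1,0,0,6,0,0,7,3],
    ![0,0,5,0,2,4,0,0],
    ![4,0,3,0,6,0,0,0],
    ![0,7,0,2,0,1,0,5],
    ![5,0,0,0,7,3,0,0],
    ![2,0,7,0,0,6,0,0],
    ![0,3,0,4,1,0,5,0],
    ![0,6,1,0,0,0,2,4]]

/-- structure constant table -/
def tc {k : Type*} [Field k] (a b : k) : Fin 8 → Fin 8 → k :=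
  ![![1,0,0,1,0,0,1,-a],
    ![0,a,1,0,a,-a,0,0],
    ![1,0,1,0,-1,0,b,0],
    ![0,-1,0,b,0,b,0,b],
    ![-1,0,0,b,1,-a,0,0],
    ![a,0,1,0,0,-a,0,a*b],
    ![0,a,0,-b,-b,0,-b,0],
    ![0,a,-b,0,0,0,a*b,-(a*b)]]

/-- polar form table -/
def pt {k : Type*} [Field k] (a b : k) : Fin 8 → Fin 8 → k :=
  ![![0,a,0,0,0,0,0,0],
    ![a,0,0,0,0,0,0,0],
    ![0,0,0,b,0,0,0,0],
    ![0,0,b,0,0,0,0,0],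
    ![0,0,0,0,0,0,0,-(a*b)],
    ![0,0,0,0,0,0,a*b,0],
    ![0,0,0,0,0,a*b,0,0],
    ![0,0,0,0,-(a*b),0,0,0]]

variable {k : Type*} [Field k] {S : Type*} [AddCommGroup S] [Module k S]
variable (mul : S →ₗ[k] S →ₗ[k] S) (n : QuadraticForm k S)

lemma polarL (hcomp : ∀ a b : S, n (mul a b) = n a * n b) (a b c : S) :
    polar n (mul a c) (mul b c) = polar n a b * n c := by
  have h : mul (a + b) c = mul a c + mul b c := by
    rw [map_add]; rfl
  simp only [polar, ← h, hcomp]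
  ring

lemma polarR (hcomp : ∀ a b : S, n (mul a b) = n a * n b) (a b c : S) :
    polar n (mul a b) (mul a c) = n a * polar n b c := by
  have h : mul a (b + c) = mul a b + mul a c := map_add _ _ _
  simp only [polar, ← h, hcomp]
  ring

variable (hnondeg : ∀ a : S, (∀ b : S, polar n a b = 0) → a = 0)
  (hcomp : ∀ a b : S, n (mul a b) = n a * n b)
  (hassoc : ∀ a b c : S, polar n (mul a b) c = polar n a (mul b c))

include hnondeg hcomp hassoc

lemma mulL (a b : S) : mul (mul a b) a = n a • b := by
  have h : ∀ z, polar n (mul (mul a b) a - n a • b) z = 0 := by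
    intro z
    rw [polar_sub_left, hassoc, polarR mul n hcomp, polar_smul_left, smul_eq_mul, sub_self]
  exact sub_eq_zero.mp (hnondeg _ h)

lemma mulR (a b : S) : mul a (mul b a) = n a • b := by
  have h : ∀ z, polar n (mul a (mul b a) - n a • b) z = 0 := by
    intro z
    rw [polar_sub_left, polar_comm, ← hassoc, polarL mul n hcomp, polar_smul_left,
      smul_eq_mul, polar_comm]
    ring
  exact sub_eq_zero.mp (hnondeg _ h)

lemma L3 (a b c : S) : mul (mul a b) c + mul (mul c b) a = polar n a c • b := by
  have h := mulL mul n hnondeg hcomp hassoc (a + c) b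
  have expand : mul (mul (a+c) b) (a+c)
      = mul (mul a b) a + mul (mul a b) c + mul (mul c b) a + mul (mul c b) c := by
    simp only [map_add, LinearMap.add_apply]; abel
  rw [expand, mulL mul n hnondeg hcomp hassoc a b, mulL mul n hnondeg hcomp hassoc c b] at h
  have hn : n (a + c) = n a + n c + polar n a c := by simp only [polar]; ring
  rw [hn, add_smul, add_smul] at h
  linear_combination (norm := module) h

lemma L4 (a b c : S) : mul a (mul b c) + mul c (mul b a) = polar n a c • b := by
  have h := mulR mul n hnondeg hcomp hassoc (a + c) b
  have expand : mul (a+c) (mul b (a+c))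
      = mul a (mul b a) + mul a (mul b c) + mul c (mul b a) + mul c (mul b c) := by
    simp only [map_add, LinearMap.add_apply]; abel
  rw [expand, mulR mul n hnondeg hcomp hassoc a b, mulR mul n hnondeg hcomp hassoc c b] at h
  have hn : n (a + c) = n a + n c + polar n a c := by simp only [polar]; ring
  rw [hn, add_smul, add_smul] at h
  linear_combination (norm := module) h

set_option maxHeartbeats 3000000 in
lemma exists_std_basis (hdim : Module.finrank k S = 8)
    (x y : S) (hxn : n x = 0) (hyn : n y = 0)
    (hxa : polar n x (mul x x) ≠ 0) (hya : polar n y (mul y y) ≠ 0)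
    (o1 : polar n x y = 0) (o2 : polar n x (mul y y) = 0)
    (o3 : polar n (mul x x) y = 0) (o4 : polar n (mul x x) (mul y y) = 0)
    (hxy : mul x y = 0) :
    ∃ e : Module.Basis (Fin 8) k S,
      ⇑e = ![x, mul x x, y, mul y y, mul y x, mul (mul x x) y,
            mul x (mul y y), mul (mul y x) (mul y x)] ∧
      (∀ i j, mul (e i) (e j)
        = tc (polar n x (mul x x)) (polar n y (mul y y)) i j • e (tIdx i j)) ∧
      (∀ i j, polar n (e i) (e j)
        = pt (polar n x (mul x x)) (polar n y (mul y y)) i j) ∧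
      (∀ i, n (e i) = 0) := by
  have mL := mulL mul n hnondeg hcomp hassoc
  have mR := mulR mul n hnondeg hcomp hassoc
  have l3 := L3 mul n hnondeg hcomp hassoc
  have l4 := L4 mul n hnondeg hcomp hassoc
  have o1' : polar n y x = 0 := by rw [polar_comm]; exact o1
  have o2' : polar n (mul y y) x = 0 := by rw [polar_comm]; exact o2
  have o3' : polar n y (mul x x) = 0 := by rw [polar_comm]; exact o3
  have o4' : polar n (mul y y) (mul x x) = 0 := by rw [polar_comm]; exact o4
  have nx2 : n (mul x x) = 0 := by rw [hcomp, hxn, mul_zero]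
  have ny2 : n (mul y y) = 0 := by rw [hcomp, hyn, mul_zero]
  have nu : n (mul y x) = 0 := by rw [hcomp, hyn, zero_mul]
  have nv : n (mul (mul x x) y) = 0 := by rw [hcomp, nx2, zero_mul]
  have nt : n (mul x (mul y y)) = 0 := by rw [hcomp, hxn, zero_mul]
  have nw : n (mul (mul y x) (mul y x)) = 0 := by rw [hcomp, nu, zero_mul]
  have h1 : mul x (mul x x) = 0 := by rw [mR x x, hxn, zero_smul]
  have h2 : mul (mul x x) x = 0 := by rw [mL x x, hxn, zero_smul]
  have h3 : mul y (mul y y) = 0 := by rw [mR y y, hyn, zero_smul]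
  have h4 : mul (mul y y) y = 0 := by rw [mL y y, hyn, zero_smul]
  have h5 : mul (mul y x) y = 0 := by rw [mL y x, hyn, zero_smul]
  have h6 : mul x (mul y x) = 0 := by rw [mR x y, hxn, zero_smul]
  have h7 : mul y (mul (mul x x) y) = 0 := by rw [mR y (mul x x), hyn, zero_smul]
  have h8 : mul (mul y y) (mul x (mul y y)) = 0 := by rw [mR (mul y y) x, ny2, zero_smul]
  have h9 : mul (mul x (mul y y)) x = 0 := by rw [mL x (mul y y), hxn, zero_smul]
  have h11 : mul (mul (mul y x) (mul y x)) (mul y x) = 0 := by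
    rw [mL (mul y x) (mul y x), nu, zero_smul]
  have h12 : mul (mul y x) (mul (mul y x) (mul y x)) = 0 := by
    rw [mR (mul y x) (mul y x), nu, zero_smul]
  have h13 : mul (mul (mul x x) y) (mul x x) = 0 := by
    rw [mL (mul x x) y, nx2, zero_smul]
  have p1 : mul (mul x x) (mul x x) = (polar n x (mul x x)) • x := by
    have h := l3 (mul x x) x x
    rw [h2, polar_comm] at h
    try simp only [map_zero, LinearMap.zero_apply, _root_.map_neg, LinearMap.neg_apply, _root_.map_smul, LinearMap.smul_apply, zero_smul, smul_neg, neg_neg, add_zero, zero_add] at h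
    linear_combination (norm := module) h
  have p2 : mul (mul y y) (mul y y) = (polar n y (mul y y)) • y := by
    have h := l3 (mul y y) y y
    rw [h4, polar_comm] at h
    try simp only [map_zero, LinearMap.zero_apply, _root_.map_neg, LinearMap.neg_apply, _root_.map_smul, LinearMap.smul_apply, zero_smul, smul_neg, neg_neg, add_zero, zero_add] at h
    linear_combination (norm := module) h
  have p3 : mul (mul y x) x = -(mul (mul x x) y) := by
    have h := l3 x x y
    rw [o1, zero_smul] at h
    try simp only [map_zero, LinearMap.zero_apply, _root_.map_neg, LinearMap.neg_apply, _root_.map_smul, LinearMap.smul_apply, zero_smul, smul_neg, neg_neg, add_zero, zero_add] at h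
    linear_combination (norm := module) h
  have p4 : mul y (mul y x) = -(mul x (mul y y)) := by
    have h := l4 y y x
    rw [o1', zero_smul] at h
    try simp only [map_zero, LinearMap.zero_apply, _root_.map_neg, LinearMap.neg_apply, _root_.map_smul, LinearMap.smul_apply, zero_smul, smul_neg, neg_neg, add_zero, zero_add] at h
    linear_combination (norm := module) h
  have p5 : mul y (mul x x) = 0 := by
    have h := l4 y x x
    rw [hxy, o1', zero_smul] at h
    try simp only [map_zero, LinearMap.zero_apply, _root_.map_neg, LinearMap.neg_apply, _root_.map_smul, LinearMap.smul_apply, zero_smul, smul_neg, neg_neg, add_zero, zero_add] at h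
    linear_combination (norm := module) h
  have p6 : mul (mul y y) x = 0 := by
    have h := l3 y y x
    rw [hxy, o1', zero_smul] at h
    try simp only [map_zero, LinearMap.zero_apply, _root_.map_neg, LinearMap.neg_apply, _root_.map_smul, LinearMap.smul_apply, zero_smul, smul_neg, neg_neg, add_zero, zero_add] at h
    linear_combination (norm := module) h
  have p7 : mul (mul x x) (mul y x) = (polar n x (mul x x)) • y := by
    have h := l4 (mul x x) y x
    rw [p5, polar_comm] at h
    try simp only [map_zero, LinearMap.zero_apply, _root_.map_neg, LinearMap.neg_apply, _root_.map_smul, LinearMap.smul_apply, zero_smul, smul_neg, neg_neg, add_zero, zero_add] at h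
    linear_combination (norm := module) h
  have p8 : mul (mul y x) (mul y y) = (polar n y (mul y y)) • x := by
    have h := l3 y x (mul y y)
    rw [p6] at h
    try simp only [map_zero, LinearMap.zero_apply, _root_.map_neg, LinearMap.neg_apply, _root_.map_smul, LinearMap.smul_apply, zero_smul, smul_neg, neg_neg, add_zero, zero_add] at h
    linear_combination (norm := module) h
  have p9 : mul y (mul x (mul y y)) = (polar n y (mul y y)) • x := by
    have h := l4 y x (mul y y)
    rw [hxy] at h
    try simp only [map_zero, LinearMap.zero_apply, _root_.map_neg, LinearMap.neg_apply, _root_.map_smul, LinearMap.smul_apply, zero_smul, smul_neg, neg_neg, add_zero, zero_add] at h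
    linear_combination (norm := module) h
  have p10 : mul (mul x x) (mul y y) = 0 := by
    have h := l3 x x (mul y y)
    rw [p6, o2, zero_smul] at h
    try simp only [map_zero, LinearMap.zero_apply, _root_.map_neg, LinearMap.neg_apply, _root_.map_smul, LinearMap.smul_apply, zero_smul, smul_neg, neg_neg, add_zero, zero_add] at h
    linear_combination (norm := module) h
  have p11 : mul (mul y x) (mul x x) = 0 := by
    have h := l3 y x (mul x x)
    rw [h2, o3', zero_smul] at h
    try simp only [map_zero, LinearMap.zero_apply, _root_.map_neg, LinearMap.neg_apply, _root_.map_smul, LinearMap.smul_apply, zero_smul, smul_neg, neg_neg, add_zero, zero_add] at h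
    linear_combination (norm := module) h
  have p12 : mul (mul x (mul y y)) y = 0 := by
    have h := l3 x (mul y y) y
    rw [h3, o1, zero_smul] at h
    try simp only [map_zero, LinearMap.zero_apply, _root_.map_neg, LinearMap.neg_apply, _root_.map_smul, LinearMap.smul_apply, zero_smul, smul_neg, neg_neg, add_zero, zero_add] at h
    linear_combination (norm := module) h
  have p14 : mul x (mul (mul x x) y) = 0 := by
    have h := l4 x (mul x x) y
    rw [h2, o1, zero_smul] at h
    try simp only [map_zero, LinearMap.zero_apply, _root_.map_neg, LinearMap.neg_apply, _root_.map_smul, LinearMap.smul_apply, zero_smul, smul_neg, neg_neg, add_zero, zero_add] at h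
    linear_combination (norm := module) h
  have q1 : polar n x (mul y x) = 0 := by
    rw [polar_comm, hassoc]; exact o3'
  have q1' : polar n (mul y x) x = 0 := by rw [polar_comm]; exact q1
  have q2 : polar n (mul x x) (mul y x) = 0 := by
    rw [polar_comm, hassoc, h1, polar_zero_right]
  have q2' : polar n (mul y x) (mul x x) = 0 := by rw [polar_comm]; exact q2
  have q3 : polar n y (mul y x) = 0 := by
    rw [polar_comm, hassoc, hxy, polar_zero_right]
  have q3' : polar n (mul y x) y = 0 := by rw [polar_comm]; exact q3
  have q5 : polar n y (mul x (mul y y)) = 0 := by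
    rw [polar_comm, hassoc, h4, polar_zero_right]
  have q4 : polar n (mul y y) (mul y x) = 0 := by
    rw [polar_comm, hassoc]; exact q5
  have q4' : polar n (mul y x) (mul y y) = 0 := by rw [polar_comm]; exact q4
  have q6 : polar n x (mul (mul x x) y) = 0 := by
    rw [polar_comm, hassoc]; exact q2
  have q7 : polar n (mul x x) (mul (mul x x) y) = 0 := by
    rw [polar_comm, hassoc, p5, polar_zero_right]
  have q8 : polar n y (mul (mul x x) y) = 0 := by
    rw [polar_comm, hassoc]; exact o4
  have q9 : polar n (mul y y) (mul (mul x x) y) = 0 := by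
    rw [polar_comm, hassoc, h3, polar_zero_right]
  have q10 : polar n x (mul x (mul y y)) = 0 := by
    rw [polar_comm, hassoc, p6, polar_zero_right]
  have qY2T : polar n (mul y y) (mul x (mul y y)) = 0 := by
    rw [polar_comm, hassoc, p2, polar_smul_right, o1, smul_zero]
  have qUV : polar n (mul y x) (mul (mul x x) y) = 0 := by
    rw [hassoc, p14, polar_zero_right]
  have qVU : polar n (mul (mul x x) y) (mul y x) = 0 := by rw [polar_comm]; exact qUV
  have qxW : polar n x (mul (mul y x) (mul y x)) = 0 := by
    rw [polar_comm, hassoc, p3, polar_neg_right, qUV, neg_zero]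
  have p13a : mul (mul (mul x x) y) y = -(mul (mul y y) (mul x x)) := by
    have h := l3 (mul x x) y y
    rw [o3, zero_smul] at h
    try simp only [map_zero, LinearMap.zero_apply, _root_.map_neg, LinearMap.neg_apply, _root_.map_smul, LinearMap.smul_apply, zero_smul, smul_neg, neg_neg, add_zero, zero_add] at h
    linear_combination (norm := module) h
  have p13b : mul (mul y x) (mul y x) = mul (mul (mul x x) y) y := by
    have h := l3 y x (mul y x)
    rw [p3, q3, zero_smul] at h
    try simp only [map_zero, LinearMap.zero_apply, _root_.map_neg, LinearMap.neg_apply, _root_.map_smul, LinearMap.smul_apply, zero_smul, smul_neg, neg_neg, add_zero, zero_add] at h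
    linear_combination (norm := module) h
  have p13 : mul (mul y y) (mul x x) = -(mul (mul y x) (mul y x)) := by
    linear_combination (norm := module) p13b + p13a
  have p13c : mul (mul (mul x x) y) y = mul (mul y x) (mul y x) := p13b.symm
  have p15 : mul x (mul x (mul y y)) = mul (mul y x) (mul y x) := by
    have h := l4 x x (mul y y)
    rw [p13, o2, zero_smul] at h
    try simp only [map_zero, LinearMap.zero_apply, _root_.map_neg, LinearMap.neg_apply, _root_.map_smul, LinearMap.smul_apply, zero_smul, smul_neg, neg_neg, add_zero, zero_add] at h
    linear_combination (norm := module) h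
  have p17 : mul (mul y x) (mul (mul x x) y) = -((polar n x (mul x x)) • (mul y y)) := by
    have h := l4 (mul y x) (mul x x) y
    rw [p7, q3', zero_smul] at h
    try simp only [map_zero, LinearMap.zero_apply, _root_.map_neg, LinearMap.neg_apply, _root_.map_smul, LinearMap.smul_apply, zero_smul, smul_neg, neg_neg, add_zero, zero_add] at h
    linear_combination (norm := module) h
  have p16 : mul x (mul (mul y x) (mul y x)) = -((polar n x (mul x x)) • (mul y y)) := by
    have h := l4 x (mul y x) (mul y x)
    rw [p3, q1, zero_smul, _root_.map_neg, p17] at h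
    try simp only [map_zero, LinearMap.zero_apply, _root_.map_neg, LinearMap.neg_apply, _root_.map_smul, LinearMap.smul_apply, zero_smul, smul_neg, neg_neg, add_zero, zero_add] at h
    linear_combination (norm := module) h
  have p18 : mul y (mul (mul y x) (mul y x)) = 0 := by
    have h := l4 y (mul y x) (mul y x)
    rw [h5, q3, zero_smul] at h
    try simp only [map_zero, LinearMap.zero_apply, _root_.map_neg, LinearMap.neg_apply, _root_.map_smul, LinearMap.smul_apply, zero_smul, smul_neg, neg_neg, add_zero, zero_add] at h
    linear_combination (norm := module) h
  have p19 : mul (mul y y) (mul (mul y x) (mul y x)) = (polar n y (mul y y)) • (mul (mul x x) y) := by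
    have h := l4 (mul y y) (mul y x) (mul y x)
    rw [p8, _root_.map_smul, p3, q4, zero_smul] at h
    try simp only [map_zero, LinearMap.zero_apply, _root_.map_neg, LinearMap.neg_apply, _root_.map_smul, LinearMap.smul_apply, zero_smul, smul_neg, neg_neg, add_zero, zero_add] at h
    linear_combination (norm := module) h
  have p20 : mul (mul x x) (mul (mul x x) y) = -((polar n x (mul x x)) • (mul y x)) := by
    have h := l4 (mul x x) (mul x x) y
    rw [p1, _root_.map_smul, o3, zero_smul] at h
    try simp only [map_zero, LinearMap.zero_apply, _root_.map_neg, LinearMap.neg_apply, _root_.map_smul, LinearMap.smul_apply, zero_smul, smul_neg, neg_neg, add_zero, zero_add] at h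
    linear_combination (norm := module) h
  have p21 : mul (mul x x) (mul x (mul y y)) = 0 := by
    have h := l4 (mul x x) x (mul y y)
    rw [h1, o4, zero_smul] at h
    try simp only [map_zero, LinearMap.zero_apply, _root_.map_neg, LinearMap.neg_apply, _root_.map_smul, LinearMap.smul_apply, zero_smul, smul_neg, neg_neg, add_zero, zero_add] at h
    linear_combination (norm := module) h
  have p22 : mul (mul x x) (mul (mul y x) (mul y x)) = 0 := by
    have h := l4 (mul x x) (mul y x) (mul y x)
    rw [p11, q2, zero_smul] at h
    try simp only [map_zero, LinearMap.zero_apply, _root_.map_neg, LinearMap.neg_apply, _root_.map_smul, LinearMap.smul_apply, zero_smul, smul_neg, neg_neg, add_zero, zero_add] at h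
    linear_combination (norm := module) h
  have p23 : mul (mul y y) (mul y x) = 0 := by
    have h := l4 (mul y y) y x
    rw [h3, o2', zero_smul] at h
    try simp only [map_zero, LinearMap.zero_apply, _root_.map_neg, LinearMap.neg_apply, _root_.map_smul, LinearMap.smul_apply, zero_smul, smul_neg, neg_neg, add_zero, zero_add] at h
    linear_combination (norm := module) h
  have p24 : mul (mul y y) (mul (mul x x) y) = (polar n y (mul y y)) • (mul x x) := by
    have h := l4 (mul y y) (mul x x) y
    rw [p10, polar_comm] at h
    try simp only [map_zero, LinearMap.zero_apply, _root_.map_neg, LinearMap.neg_apply, _root_.map_smul, LinearMap.smul_apply, zero_smul, smul_neg, neg_neg, add_zero, zero_add] at h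
    linear_combination (norm := module) h
  have p26 : mul (mul (mul x x) y) x = (polar n x (mul x x)) • y := by
    have h := l3 (mul x x) y x
    rw [hxy, polar_comm] at h
    try simp only [map_zero, LinearMap.zero_apply, _root_.map_neg, LinearMap.neg_apply, _root_.map_smul, LinearMap.smul_apply, zero_smul, smul_neg, neg_neg, add_zero, zero_add] at h
    linear_combination (norm := module) h
  have p27 : mul (mul (mul x x) y) (mul y y) = 0 := by
    have h := l3 (mul x x) y (mul y y)
    rw [h4, o4, zero_smul] at h
    try simp only [map_zero, LinearMap.zero_apply, _root_.map_neg, LinearMap.neg_apply, _root_.map_smul, LinearMap.smul_apply, zero_smul, smul_neg, neg_neg, add_zero, zero_add] at h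
    linear_combination (norm := module) h
  have p28 : mul (mul (mul x x) y) (mul y x) = 0 := by
    have h := l3 (mul x x) y (mul y x)
    rw [h5, q2, zero_smul] at h
    try simp only [map_zero, LinearMap.zero_apply, _root_.map_neg, LinearMap.neg_apply, _root_.map_smul, LinearMap.smul_apply, zero_smul, smul_neg, neg_neg, add_zero, zero_add] at h
    linear_combination (norm := module) h
  have p30 : mul (mul (mul y x) (mul y x)) (mul x x) = (polar n x (mul x x)) • (mul x (mul y y)) := by
    have h := l3 (mul y x) (mul y x) (mul x x)
    rw [p7, q2', zero_smul, _root_.map_smul, LinearMap.smul_apply, p4] at h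
    try simp only [map_zero, LinearMap.zero_apply, _root_.map_neg, LinearMap.neg_apply, _root_.map_smul, LinearMap.smul_apply, zero_smul, smul_neg, neg_neg, add_zero, zero_add] at h
    linear_combination (norm := module) h
  have p29 : mul (mul (mul x x) y) (mul (mul x x) y) = -((polar n x (mul x x)) • (mul x (mul y y))) := by
    have h := l3 (mul x x) y (mul (mul x x) y)
    rw [p13c, p30, q7, zero_smul] at h
    try simp only [map_zero, LinearMap.zero_apply, _root_.map_neg, LinearMap.neg_apply, _root_.map_smul, LinearMap.smul_apply, zero_smul, smul_neg, neg_neg, add_zero, zero_add] at h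
    linear_combination (norm := module) h
  have q11 : polar n (mul x x) (mul x (mul y y)) = 0 := by
    rw [polar_comm, hassoc, p13, polar_neg_right, qxW, neg_zero]
  have q12 : polar n y (mul (mul y x) (mul y x)) = 0 := by
    rw [polar_comm, hassoc, h5, polar_zero_right]
  have q13 : polar n (mul y y) (mul (mul y x) (mul y x)) = 0 := by
    rw [polar_comm, hassoc, p8, polar_smul_right, q1', smul_zero]
  have q14 : polar n (mul x x) (mul (mul y x) (mul y x)) = 0 := by
    rw [polar_comm, hassoc, p11, polar_zero_right]
  have q15 : polar n (mul y x) (mul x (mul y y)) = 0 := by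
    rw [hassoc, p15]
    rw [polar_comm] at q12
    rwa [polar_comm]
  have q16 : polar n (mul y x) (mul (mul y x) (mul y x))
      = -(polar n x (mul x x) * polar n y (mul y y)) := by
    rw [hassoc, p16, polar_neg_right, polar_smul_right, smul_eq_mul]
  have q16' : polar n (mul (mul y x) (mul y x)) (mul y x)
      = -(polar n x (mul x x) * polar n y (mul y y)) := by rw [polar_comm]; exact q16
  have q17 : polar n (mul (mul x x) y) (mul x (mul y y))
      = polar n x (mul x x) * polar n y (mul y y) := by
    rw [hassoc, p9, polar_smul_right, smul_eq_mul, polar_comm _ (mul x x) x]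
    ring
  have q18 : polar n (mul (mul x x) y) (mul (mul y x) (mul y x)) = 0 := by
    rw [hassoc, p18, polar_zero_right]
  have q19 : polar n (mul x (mul y y)) (mul (mul y x) (mul y x)) = 0 := by
    rw [hassoc, p19, polar_smul_right, q6, smul_zero]
  have p31 : mul (mul (mul x x) y) (mul x (mul y y)) = 0 := by
    have h := l3 (mul x x) y (mul x (mul y y))
    rw [p12, q11, zero_smul] at h
    try simp only [map_zero, LinearMap.zero_apply, _root_.map_neg, LinearMap.neg_apply, _root_.map_smul, LinearMap.smul_apply, zero_smul, smul_neg, neg_neg, add_zero, zero_add] at h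
    linear_combination (norm := module) h
  have p34 : mul (mul x (mul y y)) (mul y x) = -((polar n y (mul y y)) • (mul x x)) := by
    have h := l3 x (mul y y) (mul y x)
    rw [p8, q1, zero_smul, _root_.map_smul, LinearMap.smul_apply] at h
    try simp only [map_zero, LinearMap.zero_apply, _root_.map_neg, LinearMap.neg_apply, _root_.map_smul, LinearMap.smul_apply, zero_smul, smul_neg, neg_neg, add_zero, zero_add] at h
    linear_combination (norm := module) h
  have p33 : mul (mul (mul y x) (mul y x)) y = -((polar n y (mul y y)) • (mul x x)) := by
    have h := l3 (mul y x) (mul y x) y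
    rw [p4, q3', zero_smul, _root_.map_neg, LinearMap.neg_apply, p34] at h
    try simp only [map_zero, LinearMap.zero_apply, _root_.map_neg, LinearMap.neg_apply, _root_.map_smul, LinearMap.smul_apply, zero_smul, smul_neg, neg_neg, add_zero, zero_add] at h
    linear_combination (norm := module) h
  have p32 : mul (mul (mul x x) y) (mul (mul y x) (mul y x)) = ((polar n x (mul x x)) * (polar n y (mul y y))) • x := by
    have h := l3 (mul x x) y (mul (mul y x) (mul y x))
    rw [p33, q14, zero_smul, _root_.map_neg, LinearMap.neg_apply, _root_.map_smul, LinearMap.smul_apply, p1] at h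
    try simp only [map_zero, LinearMap.zero_apply, _root_.map_neg, LinearMap.neg_apply, _root_.map_smul, LinearMap.smul_apply, zero_smul, smul_neg, neg_neg, add_zero, zero_add] at h
    linear_combination (norm := module) h
  have p35 : mul (mul x (mul y y)) (mul x x) = (polar n x (mul x x)) • (mul y y) := by
    have h := l3 x (mul y y) (mul x x)
    rw [p10] at h
    try simp only [map_zero, LinearMap.zero_apply, _root_.map_neg, LinearMap.neg_apply, _root_.map_smul, LinearMap.smul_apply, zero_smul, smul_neg, neg_neg, add_zero, zero_add] at h
    linear_combination (norm := module) h
  have p36 : mul (mul x (mul y y)) (mul y y) = -((polar n y (mul y y)) • (mul y x)) := by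
    have h := l3 x (mul y y) (mul y y)
    rw [p2, o2, zero_smul, _root_.map_smul, LinearMap.smul_apply] at h
    try simp only [map_zero, LinearMap.zero_apply, _root_.map_neg, LinearMap.neg_apply, _root_.map_smul, LinearMap.smul_apply, zero_smul, smul_neg, neg_neg, add_zero, zero_add] at h
    linear_combination (norm := module) h
  have p37 : mul (mul x (mul y y)) (mul (mul x x) y) = 0 := by
    have h := l3 x (mul y y) (mul (mul x x) y)
    rw [p27, q6, zero_smul] at h
    try simp only [map_zero, LinearMap.zero_apply, _root_.map_neg, LinearMap.neg_apply, _root_.map_smul, LinearMap.smul_apply, zero_smul, smul_neg, neg_neg, add_zero, zero_add] at h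
    linear_combination (norm := module) h
  have p38 : mul (mul x (mul y y)) (mul x (mul y y)) = -((polar n y (mul y y)) • (mul (mul x x) y)) := by
    have h := l3 x (mul y y) (mul x (mul y y))
    rw [p36, q10, zero_smul, _root_.map_neg, LinearMap.neg_apply, _root_.map_smul, LinearMap.smul_apply, p3] at h
    try simp only [map_zero, LinearMap.zero_apply, _root_.map_neg, LinearMap.neg_apply, _root_.map_smul, LinearMap.smul_apply, zero_smul, smul_neg, neg_neg, add_zero, zero_add] at h
    linear_combination (norm := module) h
  have p40 : mul (mul (mul y x) (mul y x)) (mul y y) = 0 := by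
    have h := l3 (mul y x) (mul y x) (mul y y)
    rw [p23, q4', zero_smul] at h
    try simp only [map_zero, LinearMap.zero_apply, _root_.map_neg, LinearMap.neg_apply, _root_.map_smul, LinearMap.smul_apply, zero_smul, smul_neg, neg_neg, add_zero, zero_add] at h
    linear_combination (norm := module) h
  have p39 : mul (mul x (mul y y)) (mul (mul y x) (mul y x)) = 0 := by
    have h := l3 x (mul y y) (mul (mul y x) (mul y x))
    rw [p40, qxW, zero_smul] at h
    try simp only [map_zero, LinearMap.zero_apply, _root_.map_neg, LinearMap.neg_apply, _root_.map_smul, LinearMap.smul_apply, zero_smul, smul_neg, neg_neg, add_zero, zero_add] at h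
    linear_combination (norm := module) h
  have p41 : mul (mul (mul y x) (mul y x)) x = 0 := by
    have h := l3 (mul y x) (mul y x) x
    rw [h6, q1', zero_smul] at h
    try simp only [map_zero, LinearMap.zero_apply, _root_.map_neg, LinearMap.neg_apply, _root_.map_smul, LinearMap.smul_apply, zero_smul, smul_neg, neg_neg, add_zero, zero_add] at h
    linear_combination (norm := module) h
  have p42 : mul (mul (mul y x) (mul y x)) (mul (mul x x) y) = 0 := by
    have h := l3 (mul y x) (mul y x) (mul (mul x x) y)
    rw [p28, qUV, zero_smul] at h
    try simp only [map_zero, LinearMap.zero_apply, _root_.map_neg, LinearMap.neg_apply, _root_.map_smul, LinearMap.smul_apply, zero_smul, smul_neg, neg_neg, add_zero, zero_add] at h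
    linear_combination (norm := module) h
  have p43 : mul (mul (mul y x) (mul y x)) (mul x (mul y y)) = ((polar n x (mul x x)) * (polar n y (mul y y))) • y := by
    have h := l3 (mul y x) (mul y x) (mul x (mul y y))
    rw [p34, q15, zero_smul, _root_.map_neg, LinearMap.neg_apply, _root_.map_smul, LinearMap.smul_apply, p7] at h
    try simp only [map_zero, LinearMap.zero_apply, _root_.map_neg, LinearMap.neg_apply, _root_.map_smul, LinearMap.smul_apply, zero_smul, smul_neg, neg_neg, add_zero, zero_add] at h
    linear_combination (norm := module) h
  have p44 : mul (mul (mul y x) (mul y x)) (mul (mul y x) (mul y x)) = -(((polar n x (mul x x)) * (polar n y (mul y y))) • (mul y x)) := by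
    have h := l3 (mul y x) (mul y x) (mul (mul y x) (mul y x))
    rw [h11, q16] at h
    try simp only [map_zero, LinearMap.zero_apply, _root_.map_neg, LinearMap.neg_apply, _root_.map_smul, LinearMap.smul_apply, zero_smul, smul_neg, neg_neg, add_zero, zero_add] at h
    linear_combination (norm := module) h
  have p45 : mul (mul y x) (mul x (mul y y)) = 0 := by
    have h := l3 y x (mul x (mul y y))
    rw [h9, q5, zero_smul] at h
    try simp only [map_zero, LinearMap.zero_apply, _root_.map_neg, LinearMap.neg_apply, _root_.map_smul, LinearMap.smul_apply, zero_smul, smul_neg, neg_neg, add_zero, zero_add] at h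
    linear_combination (norm := module) h
  have dx : polar n x x = 0 := by rw [polar_self, hxn, smul_zero]
  have dx2 : polar n (mul x x) (mul x x) = 0 := by rw [polar_self, nx2, smul_zero]
  have dy : polar n y y = 0 := by rw [polar_self, hyn, smul_zero]
  have dy2 : polar n (mul y y) (mul y y) = 0 := by rw [polar_self, ny2, smul_zero]
  have du : polar n (mul y x) (mul y x) = 0 := by rw [polar_self, nu, smul_zero]
  have dv : polar n (mul (mul x x) y) (mul (mul x x) y) = 0 := by
    rw [polar_self, nv, smul_zero]
  have dt : polar n (mul x (mul y y)) (mul x (mul y y)) = 0 := by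
    rw [polar_self, nt, smul_zero]
  have dw : polar n (mul (mul y x) (mul y x)) (mul (mul y x) (mul y x)) = 0 := by
    rw [polar_self, nw, smul_zero]
  set vv : Fin 8 → S := ![x, mul x x, y, mul y y, mul y x, mul (mul x x) y,
      mul x (mul y y), mul (mul y x) (mul y x)] with hvv
  have hpolv : ∀ i j, polar n (vv i) (vv j)
      = pt (polar n x (mul x x)) (polar n y (mul y y)) i j := by
    intro i j
    fin_cases i <;> fin_cases j <;>
      simp only [hvv, pt, vec8_0, vec8_1, vec8_2, vec8_3, vec8_4, vec8_5, vec8_6, vec8_7, vec8m_0, vec8m_1, vec8m_2, vec8m_3, vec8m_4, vec8m_5, vec8m_6, vec8m_7] <;>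
      first
        | rfl
        | assumption
        | (rw [polar_comm] <;> first | rfl | assumption)
  have hli : LinearIndependent k vv := by
    rw [Fintype.linearIndependent_iff]
    intro g hg
    have key : ∀ j : Fin 8, g 0 * pt (polar n x (mul x x)) (polar n y (mul y y)) 0 j
        + g 1 * pt (polar n x (mul x x)) (polar n y (mul y y)) 1 j
        + g 2 * pt (polar n x (mul x x)) (polar n y (mul y y)) 2 j
        + g 3 * pt (polar n x (mul x x)) (polar n y (mul y y)) 3 j
        + g 4 * pt (polar n x (mul x x)) (polar n y (mul y y)) 4 j
        + g 5 * pt (polar n x (mul x x)) (polar n y (mul y y)) 5 j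
        + g 6 * pt (polar n x (mul x x)) (polar n y (mul y y)) 6 j
        + g 7 * pt (polar n x (mul x x)) (polar n y (mul y y)) 7 j = 0 := by
      intro j
      have h2 : polar n (∑ i : Fin 8, g i • vv i) (vv j) = 0 := by
        rw [hg, polar_zero_left]
      rw [Fin.sum_univ_eight] at h2
      simp only [polar_add_left, polar_smul_left, smul_eq_mul, hpolv] at h2
      exact h2
    have hab : polar n x (mul x x) * polar n y (mul y y) ≠ 0 := mul_ne_zero hxa hya
    intro i
    fin_cases i
    · have h := key 1
      simp only [pt, vec8_0, vec8_1, vec8_2, vec8_3, vec8_4, vec8_5, vec8_6, vec8_7, vec8m_0, vec8m_1, vec8m_2, vec8m_3, vec8m_4, vec8m_5, vec8m_6, vec8m_7,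
        mul_zero, add_zero, zero_add, mul_neg, neg_eq_zero] at h
      exact (mul_eq_zero.mp h).resolve_right hxa
    · have h := key 0
      simp only [pt, vec8_0, vec8_1, vec8_2, vec8_3, vec8_4, vec8_5, vec8_6, vec8_7, vec8m_0, vec8m_1, vec8m_2, vec8m_3, vec8m_4, vec8m_5, vec8m_6, vec8m_7,
        mul_zero, add_zero, zero_add, mul_neg, neg_eq_zero] at h
      exact (mul_eq_zero.mp h).resolve_right hxa
    · have h := key 3
      simp only [pt, vec8_0, vec8_1, vec8_2, vec8_3, vec8_4, vec8_5, vec8_6, vec8_7, vec8m_0, vec8m_1, vec8m_2, vec8m_3, vec8m_4, vec8m_5, vec8m_6, vec8m_7,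
        mul_zero, add_zero, zero_add, mul_neg, neg_eq_zero] at h
      exact (mul_eq_zero.mp h).resolve_right hya
    · have h := key 2
      simp only [pt, vec8_0, vec8_1, vec8_2, vec8_3, vec8_4, vec8_5, vec8_6, vec8_7, vec8m_0, vec8m_1, vec8m_2, vec8m_3, vec8m_4, vec8m_5, vec8m_6, vec8m_7,
        mul_zero, add_zero, zero_add, mul_neg, neg_eq_zero] at h
      exact (mul_eq_zero.mp h).resolve_right hya
    · have h := key 7
      simp only [pt, vec8_0, vec8_1, vec8_2, vec8_3, vec8_4, vec8_5, vec8_6, vec8_7, vec8m_0, vec8m_1, vec8m_2, vec8m_3, vec8m_4, vec8m_5, vec8m_6, vec8m_7,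
        mul_zero, add_zero, zero_add, mul_neg, neg_eq_zero] at h
      exact (mul_eq_zero.mp h).resolve_right hab
    · have h := key 6
      simp only [pt, vec8_0, vec8_1, vec8_2, vec8_3, vec8_4, vec8_5, vec8_6, vec8_7, vec8m_0, vec8m_1, vec8m_2, vec8m_3, vec8m_4, vec8m_5, vec8m_6, vec8m_7,
        mul_zero, add_zero, zero_add, mul_neg, neg_eq_zero] at h
      exact (mul_eq_zero.mp h).resolve_right hab
    · have h := key 5
      simp only [pt, vec8_0, vec8_1, vec8_2, vec8_3, vec8_4, vec8_5, vec8_6, vec8_7, vec8m_0, vec8m_1, vec8m_2, vec8m_3, vec8m_4, vec8m_5, vec8m_6, vec8m_7,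
        mul_zero, add_zero, zero_add, mul_neg, neg_eq_zero] at h
      exact (mul_eq_zero.mp h).resolve_right hab
    · have h := key 4
      simp only [pt, vec8_0, vec8_1, vec8_2, vec8_3, vec8_4, vec8_5, vec8_6, vec8_7, vec8m_0, vec8m_1, vec8m_2, vec8m_3, vec8m_4, vec8m_5, vec8m_6, vec8m_7,
        mul_zero, add_zero, zero_add, mul_neg, neg_eq_zero] at h
      exact (mul_eq_zero.mp h).resolve_right hab
  have hcard : Fintype.card (Fin 8) = Module.finrank k S := by
    rw [hdim, Fintype.card_fin]
  let e : Module.Basis (Fin 8) k S := basisOfLinearIndependentOfCardEqFinrank hli hcard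
  have he : ⇑e = vv := coe_basisOfLinearIndependentOfCardEqFinrank hli hcard
  refine ⟨e, by rw [he, hvv], ?_, ?_, ?_⟩
  · intro i j
    simp only [he]
    fin_cases i <;> fin_cases j <;>
      simp only [hvv, tc, tIdx, vec8_0, vec8_1, vec8_2, vec8_3, vec8_4, vec8_5, vec8_6,
        vec8_7, vec8m_0, vec8m_1, vec8m_2, vec8m_3, vec8m_4, vec8m_5, vec8m_6, vec8m_7,
        one_smul, zero_smul, neg_smul] <;>
      first | rfl | assumption
  · intro i j
    simp only [he]
    exact hpolv i j
  · intro i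
    simp only [he]
    fin_cases i <;>
      simp only [hvv, vec8_0, vec8_1, vec8_2, vec8_3, vec8_4, vec8_5, vec8_6, vec8_7, vec8m_0, vec8m_1, vec8m_2, vec8m_3, vec8m_4, vec8m_5, vec8m_6, vec8m_7] <;>
      assumption

end Okubo7

open QuadraticMap

set_option maxHeartbeats 1000000 in
/-- two Okubo algebras containing "standard pairs" `(x, y)` and
`(x', y')` with the same invariants `α = n(x, x*x) = n'(x', x'⋆x')` and
`β = n(y, y*y) = n'(y', y'⋆y')` are isomorphic via a norm-preserving
multiplicative linear bijection taking `x` to `x'` and `y` to `y'`. -/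
theorem okubo_isomorphism_of_standard_pairs
    {k : Type*} [Field k]
    {S : Type*} [AddCommGroup S] [Module k S]
    {S' : Type*} [AddCommGroup S'] [Module k S']
    (mul : S →ₗ[k] S →ₗ[k] S) (n : QuadraticForm k S)
    (mul' : S' →ₗ[k] S' →ₗ[k] S') (n' : QuadraticForm k S')
    (hnondeg : ∀ x : S, (∀ y : S, polar n x y = 0) → x = 0)
    (hcomp : ∀ x y : S, n (mul x y) = n x * n y)
    (hassoc : ∀ x y z : S, polar n (mul x y) z = polar n x (mul y z))
    (hdim : Module.finrank k S = 8)
    (hnopara : ¬ ∃ e : S, ∀ x : S,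
      mul e x = polar n e x • e - x ∧ mul x e = polar n e x • e - x)
    (hnondeg' : ∀ x : S', (∀ y : S', polar n' x y = 0) → x = 0)
    (hcomp' : ∀ x y : S', n' (mul' x y) = n' x * n' y)
    (hassoc' : ∀ x y z : S', polar n' (mul' x y) z = polar n' x (mul' y z))
    (hdim' : Module.finrank k S' = 8)
    (hnopara' : ¬ ∃ e : S', ∀ x : S',
      mul' e x = polar n' e x • e - x ∧ mul' x e = polar n' e x • e - x)
    (x y : S) (hxn : n x = 0) (hyn : n y = 0)
    (hxa : polar n x (mul x x) ≠ 0) (hya : polar n y (mul y y) ≠ 0)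
    (horth : ∀ a ∈ ({x, mul x x} : Set S), ∀ b ∈ ({y, mul y y} : Set S),
      polar n a b = 0)
    (hxy : mul x y = 0)
    (x' y' : S') (hxn' : n' x' = 0) (hyn' : n' y' = 0)
    (hxa' : polar n' x' (mul' x' x') ≠ 0) (hya' : polar n' y' (mul' y' y') ≠ 0)
    (horth' : ∀ a ∈ ({x', mul' x' x'} : Set S'), ∀ b ∈ ({y', mul' y' y'} : Set S'),
      polar n' a b = 0)
    (hxy' : mul' x' y' = 0)
    (hα : polar n x (mul x x) = polar n' x' (mul' x' x'))
    (hβ : polar n y (mul y y) = polar n' y' (mul' y' y')) :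
    ∃ φ : S ≃ₗ[k] S',
      (∀ a b : S, φ (mul a b) = mul' (φ a) (φ b)) ∧
      (∀ a : S, n' (φ a) = n a) ∧
      φ x = x' ∧ φ y = y' := by
  classical
  have o1 : polar n x y = 0 := horth x (by simp) y (by simp)
  have o2 : polar n x (mul y y) = 0 := horth x (by simp) (mul y y) (by simp)
  have o3 : polar n (mul x x) y = 0 := horth (mul x x) (by simp) y (by simp)
  have o4 : polar n (mul x x) (mul y y) = 0 := horth (mul x x) (by simp) (mul y y) (by simp)
  have o1' : polar n' x' y' = 0 := horth' x' (by simp) y' (by simp)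
  have o2' : polar n' x' (mul' y' y') = 0 := horth' x' (by simp) (mul' y' y') (by simp)
  have o3' : polar n' (mul' x' x') y' = 0 := horth' (mul' x' x') (by simp) y' (by simp)
  have o4' : polar n' (mul' x' x') (mul' y' y') = 0 :=
    horth' (mul' x' x') (by simp) (mul' y' y') (by simp)
  obtain ⟨e, he, hm, hp, hn0⟩ := Okubo7.exists_std_basis mul n hnondeg hcomp hassoc hdim
    x y hxn hyn hxa hya o1 o2 o3 o4 hxy
  obtain ⟨e', he', hm', hp', hn0'⟩ := Okubo7.exists_std_basis mul' n' hnondeg' hcomp' hassoc'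
    hdim' x' y' hxn' hyn' hxa' hya' o1' o2' o3' o4' hxy'
  let φ : S ≃ₗ[k] S' := e.equiv e' (Equiv.refl _)
  have hφ : ∀ i, φ (e i) = e' i := by
    intro i
    simp [φ, Module.Basis.equiv_apply]
  have hmulφ : ∀ a b : S, φ (mul a b) = mul' (φ a) (φ b) := by
    have hmaps : mul.compr₂ (φ : S →ₗ[k] S')
        = mul'.compl₁₂ (φ : S →ₗ[k] S') (φ : S →ₗ[k] S') := by
      refine e.ext fun i => e.ext fun j => ?_
      simp only [LinearMap.compr₂_apply, LinearMap.compl₁₂_apply, LinearEquiv.coe_coe]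
      rw [hm i j, _root_.map_smul, hφ, hφ, hφ, hm' i j, hα, hβ]
    intro a b
    have h := DFunLike.congr_fun (DFunLike.congr_fun hmaps a) b
    simpa only [LinearMap.compr₂_apply, LinearMap.compl₁₂_apply, LinearEquiv.coe_coe] using h
  have hpolφ : ∀ a b : S, polar n' (φ a) (φ b) = polar n a b := by
    have hmaps : (polarBilin n').compl₁₂ (φ : S →ₗ[k] S') (φ : S →ₗ[k] S')
        = polarBilin n := by
      refine e.ext fun i => e.ext fun j => ?_
      simp only [LinearMap.compl₁₂_apply, polarBilin_apply_apply, LinearEquiv.coe_coe]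
      rw [hφ, hφ, hp' i j, hp i j, hα, hβ]
    intro a b
    have h := DFunLike.congr_fun (DFunLike.congr_fun hmaps a) b
    simpa only [LinearMap.compl₁₂_apply, polarBilin_apply_apply, LinearEquiv.coe_coe] using h
  have hnormφ : ∀ a : S, n' (φ a) = n a := by
    have hd : ∀ a b : S, n' (φ (a + b)) - n (a + b)
        = (n' (φ a) - n a) + (n' (φ b) - n b) := by
      intro a b
      have e3 := hpolφ a b
      have e1 : polar n' (φ a) (φ b) = n' (φ a + φ b) - n' (φ a) - n' (φ b) := rfl
      have e2 : polar n a b = n (a + b) - n a - n b := rfl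
      rw [e1, e2] at e3
      rw [map_add]
      linear_combination e3
    have hsum : ∀ (s : Finset (Fin 8)) (f : Fin 8 → S),
        n' (φ (∑ i ∈ s, f i)) - n (∑ i ∈ s, f i)
          = ∑ i ∈ s, (n' (φ (f i)) - n (f i)) := by
      intro s f
      induction s using Finset.cons_induction with
      | empty => simp
      | cons a s ha ih => rw [Finset.sum_cons, Finset.sum_cons, hd, ih]
    intro a
    have h0 : n' (φ a) - n a = 0 := by
      rw [show a = ∑ i : Fin 8, e.repr a i • e i from (e.sum_repr a).symm,
        hsum Finset.univ (fun i => e.repr a i • e i)]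
      refine Finset.sum_eq_zero fun i _ => ?_
      simp only [_root_.map_smul, QuadraticMap.map_smul, hφ i, hn0' i, hn0 i,
        smul_zero, sub_zero, sub_self]
    have := sub_eq_zero.mp h0
    exact this
  refine ⟨φ, hmulφ, hnormφ, ?_, ?_⟩
  · have hx0 : e 0 = x := by rw [he]; rfl
    have hx0' : e' 0 = x' := by rw [he']; rfl
    rw [← hx0, hφ 0, hx0']
  · have hy0 : e 2 = y := by rw [he]; rfl
    have hy0' : e' 2 = y' := by rw [he']; rfl
    rw [← hy0, hφ 2, hy0']
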